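/- Let d ≥ 1, n ≥ 1, let Ω ⊆ ℝᵈ and U, V ⊆ ℝⁿ be open, let F : Ω → U be twice continuously differentiable, and let Φ : U → V be twice continuously differentiable with invertible Jacobian at every point. Let m : Ω → (d×d real matrices) be continuously differentiable with symmetric invertible values, and let g : U → (n×n real matrices), ĝ : V → (n×n real matrices) be continuously differentiable with symmetric invertible values satisfying g_{αβ}(x) = Σ_{κ,ι} ĝ_{κι}(Φ(x))·∂_αΦ^κ(x)·∂_βΦ^ι(x) on U. Define the coordinate map Laplacian (Δ_{m,g}F)^α := Σ_{i,j} (m⁻¹)^{ij}·( ∂_i∂_jF^α − Σ_l Γ(m)^l_{ij}·∂_lF^α + Σ_{β,γ} Γ(g)^α_{βγ}(F)·∂_iF^β·∂_jF^γ ), and analogously Δ_{m,ĝ}(Φ∘F) with ĝ. Then for every x ∈ Ω and every index κ: Σ_α ∂_αΦ^κ(F(x))·(Δ_{m,g}F)^α(x) = (Δ_{m,ĝ}(Φ∘F))^κ(x). That is, the map Laplacian is invariant under the diffeomorphism Φ when the target metric is pushed forward. -/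

import Mathlib

set_option maxHeartbeats 1000000
open Filter Topology Matrix


/-- The partial derivative of `f : ℝⁿ → ℝ` at `x` in the `i`-th coordinate direction. -/
noncomputable def partialDeriv16 {n : ℕ} (f : EuclideanSpace ℝ (Fin n) → ℝ) (i : Fin n)
    (x : EuclideanSpace ℝ (Fin n)) : ℝ :=
  fderiv ℝ f x (EuclideanSpace.single i 1)

/-- The Christoffel symbols `Γ(g)^k_{ij} = (1/2)·Σ_l (g⁻¹)^{kl}(∂_i g_{jl} + ∂_j g_{il} - ∂_l g_{ij})`
of a matrix-valued metric `g`. -/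
noncomputable def christoffel16 {n : ℕ}
    (g : EuclideanSpace ℝ (Fin n) → Matrix (Fin n) (Fin n) ℝ)
    (k i j : Fin n) (x : EuclideanSpace ℝ (Fin n)) : ℝ :=
  (1 / 2) * ∑ l, (g x)⁻¹ k l *
    (partialDeriv16 (fun y => g y j l) i x + partialDeriv16 (fun y => g y i l) j x
      - partialDeriv16 (fun y => g y i j) l x)

/-- The `α`-th component of the coordinate map Laplacian
`(Δ_{m,g}F)^α = Σ_{i,j} (m⁻¹)^{ij}(∂_i∂_jF^α - Σ_l Γ(m)^l_{ij}∂_lF^α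
  + Σ_{β,γ} Γ(g)^α_{βγ}(F)∂_iF^β ∂_jF^γ)`. -/
noncomputable def mapLaplacian16 {d n : ℕ}
    (m : EuclideanSpace ℝ (Fin d) → Matrix (Fin d) (Fin d) ℝ)
    (g : EuclideanSpace ℝ (Fin n) → Matrix (Fin n) (Fin n) ℝ)
    (F : EuclideanSpace ℝ (Fin d) → EuclideanSpace ℝ (Fin n))
    (α : Fin n) (x : EuclideanSpace ℝ (Fin d)) : ℝ :=
  ∑ i, ∑ j, (m x)⁻¹ i j *
    (partialDeriv16 (fun y => partialDeriv16 (fun z => F z α) j y) i x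
      - ∑ l, christoffel16 m l i j x * partialDeriv16 (fun y => F y α) l x
      + ∑ β, ∑ γ, christoffel16 g α β γ (F x)
          * partialDeriv16 (fun y => F y β) i x * partialDeriv16 (fun y => F y γ) j x)

namespace ML16
variable {d n : ℕ}

noncomputable def DF (F : EuclideanSpace ℝ (Fin d) → EuclideanSpace ℝ (Fin n))
    (α : Fin n) (j : Fin d) (x : EuclideanSpace ℝ (Fin d)) : ℝ :=
  fderiv ℝ F x (EuclideanSpace.single j 1) α

noncomputable def H2 (Φ : EuclideanSpace ℝ (Fin n) → EuclideanSpace ℝ (Fin n))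
    (κ α β : Fin n) (y : EuclideanSpace ℝ (Fin n)) : ℝ :=
  partialDeriv16 (DF Φ κ β) α y

lemma apply_eq_sum (L : EuclideanSpace ℝ (Fin n) →L[ℝ] ℝ) (v : EuclideanSpace ℝ (Fin n)) :
    L v = ∑ α, v α * L (EuclideanSpace.single α 1) := by
  have hv : v = ∑ α, v α • EuclideanSpace.single α (1:ℝ) := by
    ext i
    rw [WithLp.ofLp_sum, Finset.sum_apply]
    simp [EuclideanSpace.single_apply]
  conv_lhs => rw [hv]
  rw [map_sum]
  simp [smul_eq_mul]

lemma fderiv_coord {F : EuclideanSpace ℝ (Fin d) → EuclideanSpace ℝ (Fin n)}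
    {x : EuclideanSpace ℝ (Fin d)} (hF : DifferentiableAt ℝ F x) (α : Fin n)
    (v : EuclideanSpace ℝ (Fin d)) :
    fderiv ℝ (fun y => F y α) x v = fderiv ℝ F x v α := by
  have h : HasFDerivAt (fun y => F y α)
      ((EuclideanSpace.proj (𝕜 := ℝ) α).comp (fderiv ℝ F x)) x :=
    (EuclideanSpace.proj (𝕜 := ℝ) α).hasFDerivAt.comp x hF.hasFDerivAt
  rw [h.fderiv]
  rfl

lemma pd_coord {F : EuclideanSpace ℝ (Fin d) → EuclideanSpace ℝ (Fin n)}
    {x : EuclideanSpace ℝ (Fin d)} (hF : DifferentiableAt ℝ F x) (α : Fin n) (j : Fin d) :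
    partialDeriv16 (fun y => F y α) j x = DF F α j x :=
  fderiv_coord hF α _

lemma pd_congr_nhds {f g : EuclideanSpace ℝ (Fin n) → ℝ} {i : Fin n}
    {x : EuclideanSpace ℝ (Fin n)} (h : f =ᶠ[𝓝 x] g) :
    partialDeriv16 f i x = partialDeriv16 g i x := by
  unfold partialDeriv16; rw [h.fderiv_eq]

lemma pd_sum {ι : Type*} (s : Finset ι) (f : ι → EuclideanSpace ℝ (Fin n) → ℝ)
    {x : EuclideanSpace ℝ (Fin n)} (h : ∀ k ∈ s, DifferentiableAt ℝ (f k) x) (i : Fin n) :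
    partialDeriv16 (fun y => ∑ k ∈ s, f k y) i x = ∑ k ∈ s, partialDeriv16 (f k) i x := by
  unfold partialDeriv16
  rw [fderiv_fun_sum h]
  simp

lemma pd_mul {f g : EuclideanSpace ℝ (Fin n) → ℝ} {x : EuclideanSpace ℝ (Fin n)}
    (hf : DifferentiableAt ℝ f x) (hg : DifferentiableAt ℝ g x) (i : Fin n) :
    partialDeriv16 (fun y => f y * g y) i x
      = partialDeriv16 f i x * g x + f x * partialDeriv16 g i x := by
  unfold partialDeriv16
  rw [fderiv_fun_mul hf hg]
  simp [smul_eq_mul]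
  ring

lemma pd_comp {f : EuclideanSpace ℝ (Fin n) → ℝ}
    {F : EuclideanSpace ℝ (Fin d) → EuclideanSpace ℝ (Fin n)} {x : EuclideanSpace ℝ (Fin d)}
    (hf : DifferentiableAt ℝ f (F x)) (hF : DifferentiableAt ℝ F x) (i : Fin d) :
    partialDeriv16 (fun y => f (F y)) i x
      = ∑ α, partialDeriv16 f α (F x) * DF F α i x := by
  unfold partialDeriv16
  have h : fderiv ℝ (fun y => f (F y)) x = (fderiv ℝ f (F x)).comp (fderiv ℝ F x) :=
    fderiv_comp x hf hF
  rw [h]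
  have := apply_eq_sum (fderiv ℝ f (F x)) (fderiv ℝ F x (EuclideanSpace.single i 1))
  simp only [ContinuousLinearMap.comp_apply]
  rw [this]
  exact Finset.sum_congr rfl fun α _ => by rw [mul_comm]; rfl

lemma diffAt_of_contDiffOn {X : Type*} [NormedAddCommGroup X] [NormedSpace ℝ X]
    {m : ℕ} {f : EuclideanSpace ℝ (Fin d) → X} {s : Set (EuclideanSpace ℝ (Fin d))}
    {x : EuclideanSpace ℝ (Fin d)}
    (hs : IsOpen s) (hf : ContDiffOn ℝ m f s) (hm : 1 ≤ m) (hx : x ∈ s) :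
    DifferentiableAt ℝ f x :=
  ((hf.differentiableOn (by norm_cast; omega)).differentiableAt (hs.mem_nhds hx))

lemma DF_contDiffOn {F : EuclideanSpace ℝ (Fin d) → EuclideanSpace ℝ (Fin n)}
    {Ω : Set (EuclideanSpace ℝ (Fin d))} (hΩ : IsOpen Ω) (hF : ContDiffOn ℝ 2 F Ω)
    (α : Fin n) (j : Fin d) : ContDiffOn ℝ 1 (DF F α j) Ω := by
  have h1 : ContDiffOn ℝ 1 (fderiv ℝ F) Ω := hF.fderiv_of_isOpen hΩ (by norm_num)
  have h2 : ContDiffOn ℝ 1 (fun x => fderiv ℝ F x (EuclideanSpace.single j 1)) Ω :=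
    h1.clm_apply contDiffOn_const
  exact (EuclideanSpace.proj (𝕜 := ℝ) α).contDiff.comp_contDiffOn h2

lemma DF_diffAt {F : EuclideanSpace ℝ (Fin d) → EuclideanSpace ℝ (Fin n)}
    {Ω : Set (EuclideanSpace ℝ (Fin d))} (hΩ : IsOpen Ω) (hF : ContDiffOn ℝ 2 F Ω)
    {x : EuclideanSpace ℝ (Fin d)} (hx : x ∈ Ω) (α : Fin n) (j : Fin d) :
    DifferentiableAt ℝ (DF F α j) x :=
  ((DF_contDiffOn hΩ hF α j).differentiableOn one_ne_zero).differentiableAt (hΩ.mem_nhds hx)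

lemma H2_symm {Φ : EuclideanSpace ℝ (Fin n) → EuclideanSpace ℝ (Fin n)}
    {U : Set (EuclideanSpace ℝ (Fin n))} (hU : IsOpen U) (hΦ : ContDiffOn ℝ 2 Φ U)
    {y : EuclideanSpace ℝ (Fin n)} (hy : y ∈ U) (κ α β : Fin n) :
    H2 Φ κ α β y = H2 Φ κ β α y := by
  have hder : ContDiffOn ℝ 1 (fderiv ℝ Φ) U := hΦ.fderiv_of_isOpen hU (by norm_num)
  have hd2 : DifferentiableAt ℝ (fderiv ℝ Φ) y :=
    (hder.differentiableOn one_ne_zero).differentiableAt (hU.mem_nhds hy)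
  have hev : ∀ᶠ z in 𝓝 y, HasFDerivAt Φ (fderiv ℝ Φ z) z := by
    filter_upwards [hU.eventually_mem hy] with z hz
    exact (diffAt_of_contDiffOn (d := n) hU hΦ (by norm_num) hz).hasFDerivAt
  have hsym := second_derivative_symmetric_of_eventually hev hd2.hasFDerivAt
  have key : ∀ γ δ : Fin n, H2 Φ κ γ δ y
      = fderiv ℝ (fderiv ℝ Φ) y (EuclideanSpace.single γ 1) (EuclideanSpace.single δ 1) κ := by
    intro γ δ
    have hL : HasFDerivAt (DF Φ κ δ)
        (((EuclideanSpace.proj (𝕜 := ℝ) κ).comp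
          (ContinuousLinearMap.apply ℝ (EuclideanSpace ℝ (Fin n))
            (EuclideanSpace.single δ 1))).comp (fderiv ℝ (fderiv ℝ Φ) y)) y := by
      exact (((EuclideanSpace.proj (𝕜 := ℝ) κ).comp
          (ContinuousLinearMap.apply ℝ (EuclideanSpace ℝ (Fin n))
            (EuclideanSpace.single δ 1))).hasFDerivAt).comp y hd2.hasFDerivAt
    show fderiv ℝ (DF Φ κ δ) y (EuclideanSpace.single γ 1) = _
    rw [hL.fderiv]
    rfl
  rw [key α β, key β α, hsym]

section Chain
variable {Ω : Set (EuclideanSpace ℝ (Fin d))} {U V : Set (EuclideanSpace ℝ (Fin n))}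
  {F : EuclideanSpace ℝ (Fin d) → EuclideanSpace ℝ (Fin n)}
  {Φ : EuclideanSpace ℝ (Fin n) → EuclideanSpace ℝ (Fin n)}

lemma chain1 (hΩ : IsOpen Ω) (hU : IsOpen U) (hF : ContDiffOn ℝ 2 F Ω)
    (hFU : ∀ x ∈ Ω, F x ∈ U) (hΦ : ContDiffOn ℝ 2 Φ U)
    {x : EuclideanSpace ℝ (Fin d)} (hx : x ∈ Ω) (κ : Fin n) (i : Fin d) :
    partialDeriv16 (fun y => Φ (F y) κ) i x = ∑ α, DF Φ κ α (F x) * DF F α i x := by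
  have hFd : DifferentiableAt ℝ F x := diffAt_of_contDiffOn hΩ hF (by norm_num) hx
  have hΦd : DifferentiableAt ℝ Φ (F x) :=
    diffAt_of_contDiffOn hU hΦ (by norm_num) (hFU x hx)
  have hfd : DifferentiableAt ℝ (fun z => Φ z κ) (F x) :=
    (EuclideanSpace.proj (𝕜 := ℝ) κ).differentiableAt.comp _ hΦd
  rw [pd_comp hfd hFd i]
  exact Finset.sum_congr rfl fun α _ => by rw [pd_coord hΦd]

lemma chain2 (hΩ : IsOpen Ω) (hU : IsOpen U) (hF : ContDiffOn ℝ 2 F Ω)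
    (hFU : ∀ x ∈ Ω, F x ∈ U) (hΦ : ContDiffOn ℝ 2 Φ U)
    {x : EuclideanSpace ℝ (Fin d)} (hx : x ∈ Ω) (κ : Fin n) (i j : Fin d) :
    partialDeriv16 (fun y => partialDeriv16 (fun z => Φ (F z) κ) j y) i x
      = ∑ α, ((∑ β, H2 Φ κ β α (F x) * DF F β i x) * DF F α j x
          + DF Φ κ α (F x) * partialDeriv16 (DF F α j) i x) := by
  have hFd : DifferentiableAt ℝ F x := diffAt_of_contDiffOn hΩ hF (by norm_num) hx
  have hev : (fun y => partialDeriv16 (fun z => Φ (F z) κ) j y)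
      =ᶠ[𝓝 x] fun y => ∑ α, DF Φ κ α (F y) * DF F α j y := by
    filter_upwards [hΩ.eventually_mem hx] with y hy
    exact chain1 hΩ hU hF hFU hΦ hy κ j
  rw [pd_congr_nhds hev]
  have hsummand : ∀ α : Fin n, DifferentiableAt ℝ (fun y => DF Φ κ α (F y) * DF F α j y) x := by
    intro α
    exact ((DF_diffAt hU hΦ (hFU x hx) κ α).comp x hFd).mul (DF_diffAt hΩ hF hx α j)
  rw [pd_sum Finset.univ _ (fun α _ => hsummand α) i]
  refine Finset.sum_congr rfl fun α _ => ?_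
  rw [pd_mul (f := fun y => DF Φ κ α (F y)) (g := DF F α j) ((DF_diffAt hU hΦ (hFU x hx) κ α).comp x hFd) (DF_diffAt hΩ hF hx α j) i]
  rw [pd_comp (DF_diffAt hU hΦ (hFU x hx) κ α) hFd i]
  rfl

lemma secondF (hΩ : IsOpen Ω) (hF : ContDiffOn ℝ 2 F Ω)
    {x : EuclideanSpace ℝ (Fin d)} (hx : x ∈ Ω) (α : Fin n) (i j : Fin d) :
    partialDeriv16 (fun y => partialDeriv16 (fun z => F z α) j y) i x
      = partialDeriv16 (DF F α j) i x := by
  refine pd_congr_nhds ?_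
  filter_upwards [hΩ.eventually_mem hx] with y hy
  exact pd_coord (diffAt_of_contDiffOn hΩ hF (by norm_num) hy) α j

lemma Dg_eq (hU : IsOpen U) (hV : IsOpen V) (hΦ : ContDiffOn ℝ 2 Φ U)
    (hmaps : Set.MapsTo Φ U V)
    {g ghat : EuclideanSpace ℝ (Fin n) → Matrix (Fin n) (Fin n) ℝ}
    (hghatdiff : ∀ κ ι, ContDiffOn ℝ 1 (fun y => ghat y κ ι) V)
    (hpush : ∀ y ∈ U, ∀ α β, g y α β
      = ∑ κ, ∑ ι, ghat (Φ y) κ ι * partialDeriv16 (fun z => Φ z κ) α y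
          * partialDeriv16 (fun z => Φ z ι) β y)
    {y : EuclideanSpace ℝ (Fin n)} (hy : y ∈ U) (γ a b : Fin n) :
    partialDeriv16 (fun y' => g y' a b) γ y
      = (∑ p, ∑ q, (∑ r, partialDeriv16 (fun z => ghat z p q) r (Φ y) * DF Φ r γ y)
            * DF Φ p a y * DF Φ q b y)
        + ∑ p, ∑ q, ghat (Φ y) p q
            * (H2 Φ p γ a y * DF Φ q b y + DF Φ p a y * H2 Φ q γ b y) := by
  have hΦd : ∀ z ∈ U, DifferentiableAt ℝ Φ z := fun z hz =>
    diffAt_of_contDiffOn (d := n) hU hΦ (by norm_num) hz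
  have hyd := hΦd y hy
  have hev : (fun y' => g y' a b) =ᶠ[𝓝 y]
      fun y' => ∑ p, ∑ q, ghat (Φ y') p q * DF Φ p a y' * DF Φ q b y' := by
    filter_upwards [hU.eventually_mem hy] with z hz
    rw [hpush z hz a b]
    exact Finset.sum_congr rfl fun p _ => Finset.sum_congr rfl fun q _ => by
      rw [pd_coord (hΦd z hz), pd_coord (hΦd z hz)]
  rw [pd_congr_nhds hev]
  have hgΦ : ∀ p q : Fin n, DifferentiableAt ℝ (fun y' => ghat (Φ y') p q) y := by
    intro p q
    have : ContDiffOn ℝ 1 ((fun w => ghat w p q) ∘ Φ) U :=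
      (hghatdiff p q).comp (hΦ.of_le (by norm_num)) hmaps
    exact diffAt_of_contDiffOn (d := n) hU this le_rfl hy
  have hJ : ∀ (p : Fin n) (c : Fin n), DifferentiableAt ℝ (DF Φ p c) y :=
    fun p c => DF_diffAt hU hΦ hy p c
  have hsummand : ∀ p : Fin n, ∀ q : Fin n,
      DifferentiableAt ℝ (fun y' => ghat (Φ y') p q * DF Φ p a y' * DF Φ q b y') y :=
    fun p q => ((hgΦ p q).mul (hJ p a)).mul (hJ q b)
  have houter : ∀ p ∈ (Finset.univ : Finset (Fin n)), DifferentiableAt ℝ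
      (fun y' => ∑ q, ghat (Φ y') p q * DF Φ p a y' * DF Φ q b y') y := by
    intro p _
    exact DifferentiableAt.fun_sum (u := (Finset.univ : Finset (Fin n))) (x := y) (𝕜 := ℝ)
      (A := fun q y' => ghat (Φ y') p q * DF Φ p a y' * DF Φ q b y')
      (fun q _ => hsummand p q)
  rw [pd_sum Finset.univ (fun p y' => ∑ q, ghat (Φ y') p q * DF Φ p a y' * DF Φ q b y') houter γ]
  rw [← Finset.sum_add_distrib]
  refine Finset.sum_congr rfl fun p _ => ?_
  rw [pd_sum Finset.univ (fun q y' => ghat (Φ y') p q * DF Φ p a y' * DF Φ q b y') (fun q _ => hsummand p q) γ]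
  rw [← Finset.sum_add_distrib]
  refine Finset.sum_congr rfl fun q _ => ?_
  rw [pd_mul (f := fun y' => ghat (Φ y') p q * DF Φ p a y') (g := DF Φ q b)
    ((hgΦ p q).mul (hJ p a)) (hJ q b) γ]
  rw [pd_mul (f := fun y' => ghat (Φ y') p q) (g := DF Φ p a) (hgΦ p q) (hJ p a) γ]
  have hcompd : DifferentiableAt ℝ (fun z => ghat z p q) (Φ y) :=
    diffAt_of_contDiffOn (d := n) hV (hghatdiff p q) le_rfl (hmaps hy)
  rw [pd_comp (f := fun z => ghat z p q) hcompd hyd γ]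
  have h1 : partialDeriv16 (DF Φ p a) γ y = H2 Φ p γ a y := rfl
  have h2 : partialDeriv16 (DF Φ q b) γ y = H2 Φ q γ b y := rfl
  rw [h1, h2]
  ring

lemma c3 {A B C : Type*} [Fintype A] [Fintype B] [Fintype C] {M : Type*} [AddCommMonoid M]
    (f : A → B → C → M) :
    ∑ a, ∑ b, ∑ c, f a b c = ∑ b, ∑ c, ∑ a, f a b c := by
  rw [Finset.sum_comm]
  exact Finset.sum_congr rfl fun b _ => Finset.sum_comm

lemma c4 {A B C E : Type*} [Fintype A] [Fintype B] [Fintype C] [Fintype E]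
    {M : Type*} [AddCommMonoid M] (f : A → B → C → E → M) :
    ∑ a, ∑ b, ∑ c, ∑ e, f a b c e = ∑ b, ∑ c, ∑ e, ∑ a, f a b c e := by
  rw [Finset.sum_comm]
  exact Finset.sum_congr rfl fun b _ => c3 fun a c e => f a b c e

lemma c5 {A B C E K : Type*} [Fintype A] [Fintype B] [Fintype C] [Fintype E] [Fintype K]
    {M : Type*} [AddCommMonoid M] (f : A → B → C → E → K → M) :
    ∑ a, ∑ b, ∑ c, ∑ e, ∑ k, f a b c e k = ∑ b, ∑ c, ∑ e, ∑ k, ∑ a, f a b c e k := by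
  rw [Finset.sum_comm]
  exact Finset.sum_congr rfl fun b _ => c4 fun a c e k => f a b c e k

lemma key16 (G Ghat J : Matrix (Fin n) (Fin n) ℝ) (Dg Dgh H : Fin n → Fin n → Fin n → ℝ)
    (hG : G = Jᵀ * Ghat * J) (hGs : Ghat.IsSymm) (hGu : IsUnit Ghat.det) (hJ : IsUnit J.det)
    (hHs : ∀ p a b, H p a b = H p b a)
    (hDg : ∀ γ a b, Dg γ a b = (∑ p, ∑ q, (∑ r, Dgh r p q * J r γ) * J p a * J q b)
        + ∑ p, ∑ q, Ghat p q * (H p γ a * J q b + J p a * H q γ b))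
    (κ α β : Fin n) :
    ∑ δ, J κ δ * ((1 / 2) * ∑ l, G⁻¹ δ l * (Dg α β l + Dg β α l - Dg l α β))
      = H κ α β + ∑ p, ∑ q, ((1 / 2) * ∑ r, Ghat⁻¹ κ r
          * (Dgh p q r + Dgh q p r - Dgh r p q)) * J p α * J q β := by
  have hGsym : ∀ i j, Ghat i j = Ghat j i := fun i j => by
    conv_lhs => rw [← hGs]
    exact Matrix.transpose_apply _ _ _
  -- matrix identity J G⁻¹ Jᵀ = Ghat⁻¹
  have hmat : J * G⁻¹ * Jᵀ = Ghat⁻¹ := by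
    rw [hG, Matrix.mul_inv_rev, Matrix.mul_inv_rev, ← Matrix.transpose_nonsing_inv]
    have h1 : J * J⁻¹ = 1 := Matrix.mul_nonsing_inv _ hJ
    have h2 : J⁻¹ᵀ * Jᵀ = 1 := by
      rw [← Matrix.transpose_mul, Matrix.mul_nonsing_inv _ hJ, Matrix.transpose_one]
    calc J * (J⁻¹ * (Ghat⁻¹ * J⁻¹ᵀ)) * Jᵀ
        = (J * J⁻¹) * (Ghat⁻¹ * (J⁻¹ᵀ * Jᵀ)) := by
          simp only [Matrix.mul_assoc]
      _ = Ghat⁻¹ := by rw [h1, h2, Matrix.one_mul, Matrix.mul_one]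
  have M1 : ∀ p q, (∑ δ, ∑ l, J p δ * G⁻¹ δ l * J q l) = Ghat⁻¹ p q := by
    intro p q
    calc ∑ δ, ∑ l, J p δ * G⁻¹ δ l * J q l
        = ∑ l, ∑ δ, J p δ * G⁻¹ δ l * J q l := Finset.sum_comm
      _ = ∑ l, (∑ δ, J p δ * G⁻¹ δ l) * J q l := by
          exact Finset.sum_congr rfl fun l _ => by rw [Finset.sum_mul]
      _ = (J * G⁻¹ * Jᵀ) p q := by
          simp [Matrix.mul_apply, Matrix.transpose_apply, Finset.sum_mul]
      _ = Ghat⁻¹ p q := by rw [hmat]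
  have M2 : ∀ p, (∑ r, Ghat⁻¹ κ r * Ghat p r) = if κ = p then 1 else 0 := by
    intro p
    have h := Matrix.nonsing_inv_mul _ hGu (α := ℝ)
    have h2 := congrFun (congrFun h κ) p
    rw [Matrix.mul_apply, Matrix.one_apply] at h2
    rw [← h2]
    exact Finset.sum_congr rfl fun r _ => by rw [hGsym p r]
  obtain ⟨Gi, hGi⟩ : ∃ M, M = G⁻¹ := ⟨_, rfl⟩
  obtain ⟨Ghi, hGhi⟩ : ∃ M, M = Ghat⁻¹ := ⟨_, rfl⟩
  rw [← hGi, ← hGhi] at M1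
  rw [← hGhi] at M2
  rw [← hGi, ← hGhi]
  clear hGi hGhi hmat
  -- the combination identity
  have hT : ∀ l, Dg α β l + Dg β α l - Dg l α β
      = (∑ p, ∑ q, ∑ r, (Dgh p q r + Dgh q p r - Dgh r p q) * J p α * J q β * J r l)
        + 2 * ∑ p, ∑ q, Ghat p q * (H p α β * J q l) := by
    intro l
    rw [hDg, hDg, hDg]
    have hA1 : ∑ p, ∑ q, (∑ r, Dgh r p q * J r α) * J p β * J q l
        = ∑ p, ∑ q, ∑ r, Dgh p q r * J p α * J q β * J r l := by
      calc ∑ p, ∑ q, (∑ r, Dgh r p q * J r α) * J p β * J q l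
          = ∑ p, ∑ q, ∑ r, Dgh r p q * J r α * J p β * J q l := by
            refine Finset.sum_congr rfl fun p _ => Finset.sum_congr rfl fun q _ => ?_
            rw [Finset.sum_mul, Finset.sum_mul]
        _ = ∑ r, ∑ p, ∑ q, Dgh r p q * J r α * J p β * J q l := (c3 _).symm
        _ = ∑ p, ∑ q, ∑ r, Dgh p q r * J p α * J q β * J r l := rfl
    have hA2 : ∑ p, ∑ q, (∑ r, Dgh r p q * J r β) * J p α * J q l
        = ∑ p, ∑ q, ∑ r, Dgh q p r * J p α * J q β * J r l := by
      calc ∑ p, ∑ q, (∑ r, Dgh r p q * J r β) * J p α * J q l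
          = ∑ p, ∑ q, ∑ r, Dgh r p q * J r β * J p α * J q l := by
            refine Finset.sum_congr rfl fun p _ => Finset.sum_congr rfl fun q _ => ?_
            rw [Finset.sum_mul, Finset.sum_mul]
        _ = ∑ p, ∑ r, ∑ q, Dgh r p q * J r β * J p α * J q l :=
            Finset.sum_congr rfl fun p _ => Finset.sum_comm
        _ = ∑ p, ∑ q, ∑ r, Dgh q p r * J p α * J q β * J r l := by
            refine Finset.sum_congr rfl fun p _ => Finset.sum_congr rfl fun q _ =>
              Finset.sum_congr rfl fun r _ => by ring
    have hA3 : ∑ p, ∑ q, (∑ r, Dgh r p q * J r l) * J p α * J q β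
        = ∑ p, ∑ q, ∑ r, Dgh r p q * J p α * J q β * J r l := by
      refine Finset.sum_congr rfl fun p _ => Finset.sum_congr rfl fun q _ => ?_
      rw [Finset.sum_mul, Finset.sum_mul]
      exact Finset.sum_congr rfl fun r _ => by ring
    have hB : (∑ p, ∑ q, Ghat p q * (H p α β * J q l + J p β * H q α l))
        + (∑ p, ∑ q, Ghat p q * (H p β α * J q l + J p α * H q β l))
        - (∑ p, ∑ q, Ghat p q * (H p l α * J q β + J p α * H q l β))
        = 2 * ∑ p, ∑ q, Ghat p q * (H p α β * J q l) := by
      have e1 : ∀ p q : Fin n, Ghat p q * (H p β α * J q l + J p α * H q β l)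
          = Ghat p q * (H p α β * J q l) + Ghat p q * (J p α * H q l β) := by
        intro p q; rw [hHs p β α, hHs q β l]; ring
      have e2 : ∀ p q : Fin n, Ghat p q * (H p α β * J q l + J p β * H q α l)
          = Ghat p q * (H p α β * J q l) + Ghat p q * (J p β * H q α l) := fun p q => by ring
      have e3 : ∀ p q : Fin n, Ghat p q * (H p l α * J q β + J p α * H q l β)
          = Ghat p q * (H p l α * J q β) + Ghat p q * (J p α * H q l β) := fun p q => by ring
      simp only [e1, e2, e3, Finset.sum_add_distrib]
      have hcan : ∑ p, ∑ q, Ghat p q * (H p l α * J q β)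
          = ∑ p, ∑ q, Ghat p q * (J p β * H q α l) := by
        calc ∑ p, ∑ q, Ghat p q * (H p l α * J q β)
            = ∑ q, ∑ p, Ghat p q * (H p l α * J q β) := Finset.sum_comm
          _ = ∑ p, ∑ q, Ghat p q * (J p β * H q α l) := by
              refine Finset.sum_congr rfl fun q _ => Finset.sum_congr rfl fun p _ => ?_
              rw [hGsym q p, hHs p l α]; ring
      rw [hcan]; ring
    calc (∑ p, ∑ q, (∑ r, Dgh r p q * J r α) * J p β * J q l
            + ∑ p, ∑ q, Ghat p q * (H p α β * J q l + J p β * H q α l))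
          + (∑ p, ∑ q, (∑ r, Dgh r p q * J r β) * J p α * J q l
            + ∑ p, ∑ q, Ghat p q * (H p β α * J q l + J p α * H q β l))
          - (∑ p, ∑ q, (∑ r, Dgh r p q * J r l) * J p α * J q β
            + ∑ p, ∑ q, Ghat p q * (H p l α * J q β + J p α * H q l β))
        = ((∑ p, ∑ q, ∑ r, Dgh p q r * J p α * J q β * J r l)
            + (∑ p, ∑ q, ∑ r, Dgh q p r * J p α * J q β * J r l)
            - (∑ p, ∑ q, ∑ r, Dgh r p q * J p α * J q β * J r l))
          + 2 * ∑ p, ∑ q, Ghat p q * (H p α β * J q l) := by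
          rw [hA1, hA2, hA3, ← hB]; ring
      _ = (∑ p, ∑ q, ∑ r, (Dgh p q r + Dgh q p r - Dgh r p q) * J p α * J q β * J r l)
          + 2 * ∑ p, ∑ q, Ghat p q * (H p α β * J q l) := by
          congr 1
          simp only [← Finset.sum_sub_distrib, ← Finset.sum_add_distrib]
          refine Finset.sum_congr rfl fun p _ => Finset.sum_congr rfl fun q _ =>
            Finset.sum_congr rfl fun r _ => by ring
  -- final assembly
  have pull : ∀ (K : ℝ) (W : Fin n → ℝ),
      (∑ δ, ∑ l, (J κ δ * Gi δ l) * (K * W l)) = K * ∑ δ, ∑ l, J κ δ * Gi δ l * W l := by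
    intro K W
    rw [Finset.mul_sum]
    refine Finset.sum_congr rfl fun δ _ => ?_
    rw [Finset.mul_sum]
    exact Finset.sum_congr rfl fun l _ => by ring
  calc ∑ δ, J κ δ * ((1 / 2) * ∑ l, Gi δ l * (Dg α β l + Dg β α l - Dg l α β))
      = ∑ δ, ∑ l, (1 / 2 : ℝ) * ((J κ δ * Gi δ l) * (Dg α β l + Dg β α l - Dg l α β)) := by
        refine Finset.sum_congr rfl fun δ _ => ?_
        simp only [Finset.mul_sum]
        exact Finset.sum_congr rfl fun l _ => by ring
    _ = ∑ δ, ∑ l, ((1 / 2 : ℝ) * ((J κ δ * Gi δ l)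
          * (∑ p, ∑ q, ∑ r, (Dgh p q r + Dgh q p r - Dgh r p q) * J p α * J q β * J r l))
        + (J κ δ * Gi δ l) * (∑ p, ∑ q, Ghat p q * (H p α β * J q l))) := by
        refine Finset.sum_congr rfl fun δ _ => Finset.sum_congr rfl fun l _ => ?_
        rw [hT l]; ring
    _ = (∑ δ, ∑ l, (J κ δ * Gi δ l)
          * ((1 / 2 : ℝ) * ∑ p, ∑ q, ∑ r, (Dgh p q r + Dgh q p r - Dgh r p q) * J p α * J q β * J r l))
        + ∑ δ, ∑ l, (J κ δ * Gi δ l) * (∑ p, ∑ q, Ghat p q * (H p α β * J q l)) := by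
        simp only [Finset.sum_add_distrib]
        congr 1
        exact Finset.sum_congr rfl fun δ _ => Finset.sum_congr rfl fun l _ => by ring
    _ = H κ α β + ∑ p, ∑ q, ((1 / 2) * ∑ r, Ghi κ r
          * (Dgh p q r + Dgh q p r - Dgh r p q)) * J p α * J q β := by
        rw [add_comm]
        congr 1
        -- H part
        · calc ∑ δ, ∑ l, (J κ δ * Gi δ l) * (∑ p, ∑ q, Ghat p q * (H p α β * J q l))
              = ∑ δ, ∑ l, ∑ p, ∑ q, (J κ δ * Gi δ l) * (Ghat p q * (H p α β * J q l)) := by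
                refine Finset.sum_congr rfl fun δ _ => Finset.sum_congr rfl fun l _ => ?_
                simp only [Finset.mul_sum]
            _ = ∑ p, ∑ q, ∑ δ, ∑ l, (J κ δ * Gi δ l) * (Ghat p q * (H p α β * J q l)) := by
                rw [c4, c4]
            _ = ∑ p, ∑ q, (Ghat p q * H p α β) * (∑ δ, ∑ l, J κ δ * Gi δ l * J q l) := by
                refine Finset.sum_congr rfl fun p _ => Finset.sum_congr rfl fun q _ => ?_
                rw [← pull (Ghat p q * H p α β) (fun l => J q l)]
                exact Finset.sum_congr rfl fun δ _ => Finset.sum_congr rfl fun l _ => by ring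
            _ = ∑ p, ∑ q, (Ghat p q * H p α β) * Ghi κ q := by
                refine Finset.sum_congr rfl fun p _ => Finset.sum_congr rfl fun q _ => ?_
                rw [M1 κ q]
            _ = ∑ p, if κ = p then H p α β else 0 := by
                refine Finset.sum_congr rfl fun p _ => ?_
                have : ∑ q, (Ghat p q * H p α β) * Ghi κ q
                    = H p α β * ∑ r, Ghi κ r * Ghat p r := by
                  rw [Finset.mul_sum]
                  exact Finset.sum_congr rfl fun q _ => by ring
                rw [this, M2 p]
                split <;> simp
            _ = H κ α β := by simp
        -- S part
        · calc ∑ δ, ∑ l, (J κ δ * Gi δ l)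
              * ((1 / 2 : ℝ) * ∑ p, ∑ q, ∑ r, (Dgh p q r + Dgh q p r - Dgh r p q) * J p α * J q β * J r l)
              = ∑ δ, ∑ l, ∑ p, ∑ q, ∑ r, (J κ δ * Gi δ l)
                  * ((1 / 2 : ℝ) * ((Dgh p q r + Dgh q p r - Dgh r p q) * J p α * J q β * J r l)) := by
                refine Finset.sum_congr rfl fun δ _ => Finset.sum_congr rfl fun l _ => ?_
                simp only [Finset.mul_sum]
            _ = ∑ p, ∑ q, ∑ r, ∑ δ, ∑ l, (J κ δ * Gi δ l)
                  * ((1 / 2 : ℝ) * ((Dgh p q r + Dgh q p r - Dgh r p q) * J p α * J q β * J r l)) := by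
                rw [c5, c5]
            _ = ∑ p, ∑ q, ∑ r, ((1 / 2 : ℝ) * ((Dgh p q r + Dgh q p r - Dgh r p q) * J p α * J q β))
                  * (∑ δ, ∑ l, J κ δ * Gi δ l * J r l) := by
                refine Finset.sum_congr rfl fun p _ => Finset.sum_congr rfl fun q _ =>
                  Finset.sum_congr rfl fun r _ => ?_
                rw [← pull _ (fun l => J r l)]
                exact Finset.sum_congr rfl fun δ _ => Finset.sum_congr rfl fun l _ => by ring
            _ = ∑ p, ∑ q, ((1 / 2) * ∑ r, Ghi κ r
                  * (Dgh p q r + Dgh q p r - Dgh r p q)) * J p α * J q β := by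
                refine Finset.sum_congr rfl fun p _ => Finset.sum_congr rfl fun q _ => ?_
                simp only [M1]
                rw [Finset.mul_sum, Finset.sum_mul, Finset.sum_mul]
                exact Finset.sum_congr rfl fun r _ => by ring


lemma christ_key (hU : IsOpen U) (hV : IsOpen V) (hΦ : ContDiffOn ℝ 2 Φ U)
    (hmaps : Set.MapsTo Φ U V)
    {g ghat : EuclideanSpace ℝ (Fin n) → Matrix (Fin n) (Fin n) ℝ}
    (hginv : ∀ y ∈ U, IsUnit (g y).det)
    (hghatdiff : ∀ κ ι, ContDiffOn ℝ 1 (fun y => ghat y κ ι) V)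
    (hghatsymm : ∀ y ∈ V, (ghat y).IsSymm)
    (hghatinv : ∀ y ∈ V, IsUnit (ghat y).det)
    (hpush : ∀ y ∈ U, ∀ α β, g y α β
      = ∑ κ, ∑ ι, ghat (Φ y) κ ι * partialDeriv16 (fun z => Φ z κ) α y
          * partialDeriv16 (fun z => Φ z ι) β y)
    {y : EuclideanSpace ℝ (Fin n)} (hy : y ∈ U) (κ a b : Fin n) :
    ∑ δ, DF Φ κ δ y * christoffel16 g δ a b y
      = H2 Φ κ a b y + ∑ p, ∑ q, christoffel16 ghat κ p q (Φ y)
          * DF Φ p a y * DF Φ q b y := by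
  have hzV : Φ y ∈ V := hmaps hy
  have hΦd : DifferentiableAt ℝ Φ y := diffAt_of_contDiffOn (d := n) hU hΦ (by norm_num) hy
  set J : Matrix (Fin n) (Fin n) ℝ := Matrix.of (fun p c => DF Φ p c y) with hJdef
  have hG : g y = Jᵀ * ghat (Φ y) * J := by
    ext u v
    rw [hpush y hy u v]
    calc ∑ p, ∑ q, ghat (Φ y) p q * partialDeriv16 (fun z => Φ z p) u y
            * partialDeriv16 (fun z => Φ z q) v y
        = ∑ p, ∑ q, ghat (Φ y) p q * DF Φ p u y * DF Φ q v y := by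
          refine Finset.sum_congr rfl fun p _ => Finset.sum_congr rfl fun q _ => ?_
          rw [pd_coord hΦd, pd_coord hΦd]
      _ = ∑ q, (∑ p, Jᵀ u p * ghat (Φ y) p q) * J q v := by
          rw [Finset.sum_comm]
          refine Finset.sum_congr rfl fun q _ => ?_
          rw [Finset.sum_mul]
          refine Finset.sum_congr rfl fun p _ => ?_
          simp only [hJdef, Matrix.transpose_apply, Matrix.of_apply]
          ring
      _ = (Jᵀ * ghat (Φ y) * J) u v := by
          rw [Matrix.mul_apply]
          exact Finset.sum_congr rfl fun q _ => by rw [Matrix.mul_apply]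
  have hdet : IsUnit J.det := by
    have h := hginv y hy
    rw [hG] at h
    simp only [Matrix.det_mul, Matrix.det_transpose] at h
    exact isUnit_of_mul_isUnit_right h
  have hDg' : ∀ γ u v, partialDeriv16 (fun y' => g y' u v) γ y
      = (∑ p, ∑ q, (∑ r, partialDeriv16 (fun z => ghat z p q) r (Φ y) * J r γ)
            * J p u * J q v)
        + ∑ p, ∑ q, ghat (Φ y) p q
            * (H2 Φ p γ u y * J q v + J p u * H2 Φ q γ v y) := fun γ u v =>
    Dg_eq hU hV hΦ hmaps hghatdiff hpush hy γ u v
  have hkey := key16 (g y) (ghat (Φ y)) J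
    (fun γ u v => partialDeriv16 (fun y' => g y' u v) γ y)
    (fun r p q => partialDeriv16 (fun z => ghat z p q) r (Φ y))
    (fun p u v => H2 Φ p u v y)
    hG (hghatsymm _ hzV) (hghatinv _ hzV) hdet
    (fun p u v => H2_symm hU hΦ hy p u v) hDg' κ a b
  exact hkey

lemma assemble {d n : ℕ} (κ : Fin n) (J : Fin n → Fin n → ℝ) (Γg Γh Hh : Fin n → Fin n → Fin n → ℝ)
    (A Bv Cv : Fin n → ℝ) (W : Fin n → Fin d → ℝ) (M : Fin d → ℝ)
    (hK : ∀ u v, ∑ δ, J κ δ * Γg δ u v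
        = Hh κ u v + ∑ p, ∑ q, Γh κ p q * J p u * J q v) :
    ∑ α, J κ α * (A α - (∑ l, M l * W α l) + ∑ u, ∑ v, Γg α u v * Bv u * Cv v)
      = (∑ α, ((∑ β, Hh κ β α * Bv β) * Cv α + J κ α * A α))
        - (∑ l, M l * (∑ α, J κ α * W α l))
        + ∑ p, ∑ q, Γh κ p q * (∑ α, J p α * Bv α) * (∑ β, J q β * Cv β) := by
  have h1 : ∑ α, J κ α * (A α - (∑ l, M l * W α l) + ∑ u, ∑ v, Γg α u v * Bv u * Cv v)
      = (∑ α, J κ α * A α) - (∑ α, J κ α * ∑ l, M l * W α l)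
        + ∑ α, J κ α * ∑ u, ∑ v, Γg α u v * Bv u * Cv v := by
    simp only [mul_sub, mul_add, Finset.sum_add_distrib, Finset.sum_sub_distrib]
  have hT2 : ∑ α, J κ α * ∑ l, M l * W α l = ∑ l, M l * (∑ α, J κ α * W α l) := by
    calc ∑ α, J κ α * ∑ l, M l * W α l
        = ∑ α, ∑ l, J κ α * (M l * W α l) := by
          exact Finset.sum_congr rfl fun α _ => Finset.mul_sum _ _ _
      _ = ∑ l, ∑ α, J κ α * (M l * W α l) := Finset.sum_comm
      _ = ∑ l, M l * (∑ α, J κ α * W α l) := by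
          refine Finset.sum_congr rfl fun l _ => ?_
          rw [Finset.mul_sum]
          exact Finset.sum_congr rfl fun α _ => by ring
  have hT3 : ∑ α, J κ α * ∑ u, ∑ v, Γg α u v * Bv u * Cv v
      = (∑ u, ∑ v, Hh κ u v * Bv u * Cv v)
        + ∑ p, ∑ q, Γh κ p q * (∑ α, J p α * Bv α) * (∑ β, J q β * Cv β) := by
    calc ∑ α, J κ α * ∑ u, ∑ v, Γg α u v * Bv u * Cv v
        = ∑ α, ∑ u, ∑ v, J κ α * (Γg α u v * Bv u * Cv v) := by
          refine Finset.sum_congr rfl fun α _ => ?_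
          rw [Finset.mul_sum]
          exact Finset.sum_congr rfl fun u _ => Finset.mul_sum _ _ _
      _ = ∑ u, ∑ v, ∑ α, J κ α * (Γg α u v * Bv u * Cv v) := c3 _
      _ = ∑ u, ∑ v, (∑ α, J κ α * Γg α u v) * (Bv u * Cv v) := by
          refine Finset.sum_congr rfl fun u _ => Finset.sum_congr rfl fun v _ => ?_
          rw [Finset.sum_mul]
          exact Finset.sum_congr rfl fun α _ => by ring
      _ = ∑ u, ∑ v, (Hh κ u v + ∑ p, ∑ q, Γh κ p q * J p u * J q v) * (Bv u * Cv v) := by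
          refine Finset.sum_congr rfl fun u _ => Finset.sum_congr rfl fun v _ => ?_
          rw [hK u v]
      _ = (∑ u, ∑ v, Hh κ u v * Bv u * Cv v)
          + ∑ u, ∑ v, ∑ p, ∑ q, Γh κ p q * J p u * J q v * (Bv u * Cv v) := by
          rw [← Finset.sum_add_distrib]
          refine Finset.sum_congr rfl fun u _ => ?_
          rw [← Finset.sum_add_distrib]
          refine Finset.sum_congr rfl fun v _ => ?_
          rw [add_mul, Finset.sum_mul]
          congr 1
          · ring
          · exact Finset.sum_congr rfl fun p _ => by rw [Finset.sum_mul]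
      _ = (∑ u, ∑ v, Hh κ u v * Bv u * Cv v)
          + ∑ p, ∑ q, Γh κ p q * (∑ α, J p α * Bv α) * (∑ β, J q β * Cv β) := by
          congr 1
          rw [c4, c4]
          refine Finset.sum_congr rfl fun p _ => Finset.sum_congr rfl fun q _ => ?_
          calc ∑ e, ∑ a, Γh κ p q * J p e * J q a * (Bv e * Cv a)
              = ∑ e, (Γh κ p q * (J p e * Bv e)) * ∑ a, J q a * Cv a := by
                refine Finset.sum_congr rfl fun e _ => ?_
                rw [Finset.mul_sum]
                exact Finset.sum_congr rfl fun a _ => by ring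
            _ = (∑ e, Γh κ p q * (J p e * Bv e)) * ∑ a, J q a * Cv a :=
                (Finset.sum_mul _ _ _).symm
            _ = (Γh κ p q * ∑ α, J p α * Bv α) * ∑ β, J q β * Cv β := by
                congr 1
                exact (Finset.mul_sum _ _ _).symm
  have hH : ∑ u, ∑ v, Hh κ u v * Bv u * Cv v = ∑ α, (∑ β, Hh κ β α * Bv β) * Cv α := by
    calc ∑ u, ∑ v, Hh κ u v * Bv u * Cv v
        = ∑ v, ∑ u, Hh κ u v * Bv u * Cv v := Finset.sum_comm
      _ = ∑ α, (∑ β, Hh κ β α * Bv β) * Cv α := by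
          refine Finset.sum_congr rfl fun α _ => ?_
          rw [Finset.sum_mul]
  rw [h1, hT2, hT3, hH, Finset.sum_add_distrib]
  ring

lemma swap_mul {A B C : Type*} [Fintype A] [Fintype B] [Fintype C]
    (c : A → ℝ) (w : B → C → ℝ) (E : A → B → C → ℝ) :
    ∑ a, c a * (∑ i, ∑ j, w i j * E a i j)
      = ∑ i, ∑ j, w i j * (∑ a, c a * E a i j) := by
  calc ∑ a, c a * (∑ i, ∑ j, w i j * E a i j)
      = ∑ a, ∑ i, ∑ j, c a * (w i j * E a i j) := by
        refine Finset.sum_congr rfl fun a _ => ?_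
        rw [Finset.mul_sum]
        exact Finset.sum_congr rfl fun i _ => Finset.mul_sum _ _ _
    _ = ∑ i, ∑ j, ∑ a, c a * (w i j * E a i j) := c3 _
    _ = ∑ i, ∑ j, w i j * (∑ a, c a * E a i j) := by
        refine Finset.sum_congr rfl fun i _ => Finset.sum_congr rfl fun j _ => ?_
        rw [Finset.mul_sum]
        exact Finset.sum_congr rfl fun a _ => by ring

end Chain
end ML16

/-- Invariance of the map Laplacian under a diffeomorphism of the target with
push-forward metric: `dΦ(F)·Δ_{m,g}F = Δ_{m,Φ_*g}(Φ∘F)` in coordinates. -/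
theorem mapLaplacian_invariant_under_diffeomorphism
    {d n : ℕ} (hd : 1 ≤ d) (hn : 1 ≤ n)
    (Ω : Set (EuclideanSpace ℝ (Fin d))) (hΩ : IsOpen Ω)
    (U V : Set (EuclideanSpace ℝ (Fin n))) (hU : IsOpen U) (hV : IsOpen V)
    (F : EuclideanSpace ℝ (Fin d) → EuclideanSpace ℝ (Fin n))
    (hF : ContDiffOn ℝ 2 F Ω) (hFU : ∀ x ∈ Ω, F x ∈ U)
    (Φ : EuclideanSpace ℝ (Fin n) → EuclideanSpace ℝ (Fin n))
    (hΦ : ContDiffOn ℝ 2 Φ U) (hmaps : Set.MapsTo Φ U V)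
    (hjac : ∀ y ∈ U, Function.Bijective (fderiv ℝ Φ y))
    (m : EuclideanSpace ℝ (Fin d) → Matrix (Fin d) (Fin d) ℝ)
    (hmdiff : ∀ i j, ContDiffOn ℝ 1 (fun x => m x i j) Ω)
    (hmsymm : ∀ x ∈ Ω, (m x).IsSymm)
    (hminv : ∀ x ∈ Ω, IsUnit (m x).det)
    (g ghat : EuclideanSpace ℝ (Fin n) → Matrix (Fin n) (Fin n) ℝ)
    (hgdiff : ∀ α β, ContDiffOn ℝ 1 (fun y => g y α β) U)
    (hgsymm : ∀ y ∈ U, (g y).IsSymm)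
    (hginv : ∀ y ∈ U, IsUnit (g y).det)
    (hghatdiff : ∀ κ ι, ContDiffOn ℝ 1 (fun y => ghat y κ ι) V)
    (hghatsymm : ∀ y ∈ V, (ghat y).IsSymm)
    (hghatinv : ∀ y ∈ V, IsUnit (ghat y).det)
    (hpush : ∀ y ∈ U, ∀ α β, g y α β
      = ∑ κ, ∑ ι, ghat (Φ y) κ ι * partialDeriv16 (fun z => Φ z κ) α y
          * partialDeriv16 (fun z => Φ z ι) β y) :
    ∀ x ∈ Ω, ∀ κ : Fin n,
      ∑ α, partialDeriv16 (fun y => Φ y κ) α (F x) * mapLaplacian16 m g F α x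
        = mapLaplacian16 m ghat (Φ ∘ F) κ x := by
  intro x hx κ
  have hyU : F x ∈ U := hFU x hx
  have hFd : DifferentiableAt ℝ F x := ML16.diffAt_of_contDiffOn hΩ hF (by norm_num) hx
  have hΦd : DifferentiableAt ℝ Φ (F x) :=
    ML16.diffAt_of_contDiffOn (d := n) hU hΦ (by norm_num) hyU
  have hK : ∀ u v : Fin n, ∑ δ, ML16.DF Φ κ δ (F x) * christoffel16 g δ u v (F x)
      = ML16.H2 Φ κ u v (F x) + ∑ p, ∑ q, christoffel16 ghat κ p q (Φ (F x))
          * ML16.DF Φ p u (F x) * ML16.DF Φ q v (F x) :=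
    fun u v => ML16.christ_key hU hV hΦ hmaps hginv hghatdiff hghatsymm hghatinv hpush hyU κ u v
  have hcF : ∀ (u : Fin n) (i' : Fin d),
      partialDeriv16 (fun y => F y u) i' x = ML16.DF F u i' x :=
    fun u i' => ML16.pd_coord hFd u i'
  have hc2 : ∀ (α : Fin n) (i j : Fin d),
      partialDeriv16 (fun y => partialDeriv16 (fun z => F z α) j y) i x
        = partialDeriv16 (ML16.DF F α j) i x :=
    fun α i j => ML16.secondF hΩ hF hx α i j
  have hch1 : ∀ (p : Fin n) (l : Fin d),
      partialDeriv16 (fun y => Φ (F y) p) l x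
        = ∑ α, ML16.DF Φ p α (F x) * ML16.DF F α l x :=
    fun p l => ML16.chain1 hΩ hU hF hFU hΦ hx p l
  have hch2 : ∀ (i j : Fin d),
      partialDeriv16 (fun y => partialDeriv16 (fun z => Φ (F z) κ) j y) i x
        = ∑ α, ((∑ β, ML16.H2 Φ κ β α (F x) * ML16.DF F β i x) * ML16.DF F α j x
            + ML16.DF Φ κ α (F x) * partialDeriv16 (ML16.DF F α j) i x) :=
    fun i j => ML16.chain2 hΩ hU hF hFU hΦ hx κ i j
  have hcΦ : ∀ α : Fin n,
      partialDeriv16 (fun y => Φ y κ) α (F x) = ML16.DF Φ κ α (F x) :=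
    fun α => ML16.pd_coord hΦd κ α
  simp only [mapLaplacian16, Function.comp_apply]
  simp only [hcΦ, hc2, hcF, hch1, hch2]
  rw [ML16.swap_mul (fun α => ML16.DF Φ κ α (F x)) (fun i j => (m x)⁻¹ i j)
    (fun α i j => (partialDeriv16 (ML16.DF F α j) i x
      - ∑ l, christoffel16 m l i j x * ML16.DF F α l x
      + ∑ β, ∑ γ, christoffel16 g α β γ (F x) * ML16.DF F β i x * ML16.DF F γ j x))]
  refine Finset.sum_congr rfl fun i _ => Finset.sum_congr rfl fun j _ => ?_
  congr 1
  exact ML16.assemble κ (fun p c => ML16.DF Φ p c (F x))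
    (fun δ u v => christoffel16 g δ u v (F x))
    (fun a p q => christoffel16 ghat a p q (Φ (F x)))
    (fun p u v => ML16.H2 Φ p u v (F x))
    (fun α => partialDeriv16 (ML16.DF F α j) i x)
    (fun u => ML16.DF F u i x) (fun v => ML16.DF F v j x)
    (fun α l => ML16.DF F α l x) (fun l => christoffel16 m l i j x) hK
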